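/- Let L = (b_1, b_2, …, b_m) be a polyline in ℝ² and δ > 0. Suppose there are indices y, z with 1 ≤ y < z ≤ m such that the Fréchet distance between the single line segment (b_y, b_z) and the sub-polyline L[b_y, …, b_z] = (b_y, b_{y+1}, …, b_z) is at most δ. Then for all indices i, j with y ≤ i < j ≤ z, the Fréchet distance between the line segment (b_i, b_j) and the sub-polyline L[b_i, …, b_j] is at most 2δ. -/

import Mathlib

/-- Points of the Euclidean plane. -/
abbrev Pt := EuclideanSpace ℝ (Fin 2)

/-- The arc parametrization `c_L : [1, m] → ℝ²` of a polyline given by the list `L` of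
its `m` bend points (1-based indexing):
`c_L(x) = (⌊x⌋ + 1 − x)·b_⌊x⌋ + (x − ⌊x⌋)·b_⌈x⌉`. -/
noncomputable def arcParam (L : List Pt) (x : ℝ) : Pt :=
  ((⌊x⌋₊ : ℝ) + 1 - x) • L.getD (⌊x⌋₊ - 1) 0 + (x - (⌊x⌋₊ : ℝ)) • L.getD (⌈x⌉₊ - 1) 0

/-- The Fréchet distance between two polylines `L₁, L₂` (lists of points in the plane):
the infimum over continuous nondecreasing reparametrizations
`α : [0,1] → [1,|L₁|]`, `β : [0,1] → [1,|L₂|]` with `α(0) = β(0) = 1`, `α(1) = |L₁|`,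
`β(1) = |L₂|` of the maximal pointwise distance
`sup_{t ∈ [0,1]} ‖c_{L₁}(α(t)) − c_{L₂}(β(t))‖`. -/
noncomputable def frechetDist (L₁ L₂ : List Pt) : ℝ :=
  sInf { d : ℝ | ∃ α β : ℝ → ℝ,
    ContinuousOn α (Set.Icc 0 1) ∧ ContinuousOn β (Set.Icc 0 1) ∧
    MonotoneOn α (Set.Icc 0 1) ∧ MonotoneOn β (Set.Icc 0 1) ∧
    α 0 = 1 ∧ β 0 = 1 ∧ α 1 = L₁.length ∧ β 1 = L₂.length ∧
    d = sSup { e : ℝ | ∃ t ∈ Set.Icc (0 : ℝ) 1,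
          e = ‖arcParam L₁ (α t) - arcParam L₂ (β t)‖ } }

noncomputable def normSum (L : List Pt) : ℝ := (L.map (fun p => ‖p‖)).sum

lemma normSum_nonneg (L : List Pt) : 0 ≤ normSum L := by
  apply List.sum_nonneg; intro x hx
  simp only [List.mem_map, normSum] at hx ⊢
  obtain ⟨p, _, rfl⟩ := hx; positivity

lemma norm_getD_le (L : List Pt) (k : ℕ) : ‖L.getD k 0‖ ≤ normSum L := by
  induction L generalizing k with
  | nil => simp [normSum]
  | cons a l ih =>
    have hl := normSum_nonneg l
    cases k with
    | zero =>
      have := normSum_nonneg l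
      simp only [normSum, List.map_cons, List.sum_cons, List.getD_cons_zero] at this ⊢
      linarith
    | succ k =>
      have := ih k
      simp only [List.getD_cons_succ, normSum, List.map_cons, List.sum_cons] at *
      nlinarith [norm_nonneg a]

lemma norm_arcParam_le (L : List Pt) (x : ℝ) (hx : 0 ≤ x) : ‖arcParam L x‖ ≤ 2 * normSum L := by
  have h1 : (⌊x⌋₊ : ℝ) ≤ x := Nat.floor_le hx
  have h2 : x < (⌊x⌋₊ : ℝ) + 1 := Nat.lt_floor_add_one x
  have g1 := norm_getD_le L (⌊x⌋₊ - 1)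
  have g2 := norm_getD_le L (⌈x⌉₊ - 1)
  calc ‖arcParam L x‖ ≤ ((⌊x⌋₊ : ℝ) + 1 - x) * ‖L.getD (⌊x⌋₊ - 1) 0‖
        + (x - (⌊x⌋₊ : ℝ)) * ‖L.getD (⌈x⌉₊ - 1) 0‖ := by
        refine (norm_add_le _ _).trans ?_
        rw [norm_smul, norm_smul, Real.norm_of_nonneg (by linarith), Real.norm_of_nonneg (by linarith)]
    _ ≤ 2 * normSum L := by nlinarith [norm_nonneg (L.getD (⌊x⌋₊ - 1) 0), norm_nonneg (L.getD (⌈x⌉₊ - 1) 0)]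

lemma getD_drop_take (L : List Pt) (a c k : ℕ) (hk : k < c) :
    ((L.drop a).take c).getD k 0 = L.getD (a + k) 0 := by
  rw [List.getD_eq_getElem?_getD, List.getD_eq_getElem?_getD, List.getElem?_take,
    if_pos hk, List.getElem?_drop]

lemma arcParam_nat (L : List Pt) (n : ℕ) : arcParam L (n : ℝ) = L.getD (n-1) 0 := by
  simp [arcParam, Nat.floor_natCast, Nat.ceil_natCast]

lemma arcParam_pair (a b : Pt) (x : ℝ) (h1 : 1 ≤ x) (h2 : x ≤ 2) :
    arcParam [a,b] x = (2-x) • a + (x-1) • b := by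
  rcases eq_or_lt_of_le h2 with h2 | h2
  · subst h2
    have : ((2:ℝ)) = ((2:ℕ):ℝ) := by norm_num
    rw [this, arcParam_nat]
    norm_num
  · have hf : ⌊x⌋₊ = 1 := by
      rw [Nat.floor_eq_iff (by linarith : (0:ℝ) ≤ x)]
      constructor <;> push_cast <;> linarith
    rcases eq_or_lt_of_le h1 with h1 | h1
    · subst h1
      have : ((1:ℝ)) = ((1:ℕ):ℝ) := by norm_num
      rw [this, arcParam_nat]; norm_num
    · have hc : ⌈x⌉₊ = 2 := by
        rw [Nat.ceil_eq_iff (by norm_num)]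
        constructor <;> push_cast <;> linarith
      simp only [arcParam, hf, hc]
      norm_num

lemma arcParam_drop_take (L : List Pt) (a c : ℕ) (x : ℝ) (h1 : 1 ≤ x) (hc : ⌈x⌉₊ ≤ c) :
    arcParam ((L.drop a).take c) x
      = ((⌊x⌋₊:ℝ)+1-x) • L.getD (a + (⌊x⌋₊ - 1)) 0 + (x - (⌊x⌋₊:ℝ)) • L.getD (a + (⌈x⌉₊ - 1)) 0 := by
  have hfl : 1 ≤ ⌊x⌋₊ := by
    have := Nat.le_floor (le_of_eq (by norm_num) |>.trans h1 : ((1:ℕ):ℝ) ≤ x)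
    exact this
  have hfc : ⌊x⌋₊ ≤ ⌈x⌉₊ := Nat.floor_le_ceil x
  rw [arcParam, getD_drop_take _ _ _ _ (by omega), getD_drop_take _ _ _ _ (by omega)]


set_option maxHeartbeats 2000000
open Set

/-- Lemma 4.3 (innerBendsMaxDist2): if the line segment `(b_y, b_z)` is a valid shortcut
of the polyline `L = (b_1, …, b_m)` with threshold `δ` (i.e. its Fréchet distance to the
sub-polyline `L[b_y, …, b_z]` is at most `δ`), then for all `y ≤ i < j ≤ z` the segment
`(b_i, b_j)` has Fréchet distance at most `2δ` to `L[b_i, …, b_j]`. -/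
theorem frechet_inner_bends (L : List Pt) (δ : ℝ) (hδ : 0 < δ) (y z : ℕ)
    (hy : 1 ≤ y) (hyz : y < z) (hz : z ≤ L.length)
    (h : frechetDist [L.getD (y - 1) 0, L.getD (z - 1) 0]
        ((L.drop (y - 1)).take (z - y + 1)) ≤ δ) :
    ∀ i j : ℕ, y ≤ i → i < j → j ≤ z →
      frechetDist [L.getD (i - 1) 0, L.getD (j - 1) 0]
        ((L.drop (i - 1)).take (j - i + 1)) ≤ 2 * δ := by
  intro i j hyi hij hjz
  have hi1 : 1 ≤ i := hy.trans hyi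
  have hj1 : 1 ≤ j := hi1.trans hij.le
  set by_ : Pt := L.getD (y - 1) 0 with hby
  set bz : Pt := L.getD (z - 1) 0 with hbz
  set bi : Pt := L.getD (i - 1) 0 with hbi_def
  set bj : Pt := L.getD (j - 1) 0 with hbj_def
  set Lyz : List Pt := (L.drop (y - 1)).take (z - y + 1) with hLyz
  set Lij : List Pt := (L.drop (i - 1)).take (j - i + 1) with hLij
  have hlen_yz : Lyz.length = z - y + 1 := by
    simp only [hLyz, List.length_take, List.length_drop]; omega
  have hlen_ij : Lij.length = j - i + 1 := by
    simp only [hLij, List.length_take, List.length_drop]; omega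
  apply le_of_forall_pos_le_add
  intro ε hε
  -- the defining set for (y,z) is nonempty
  have hne : { d : ℝ | ∃ α β : ℝ → ℝ,
      ContinuousOn α (Set.Icc 0 1) ∧ ContinuousOn β (Set.Icc 0 1) ∧
      MonotoneOn α (Set.Icc 0 1) ∧ MonotoneOn β (Set.Icc 0 1) ∧
      α 0 = 1 ∧ β 0 = 1 ∧ α 1 = ([by_, bz] : List Pt).length ∧ β 1 = Lyz.length ∧
      d = sSup { e : ℝ | ∃ t ∈ Set.Icc (0 : ℝ) 1,
            e = ‖arcParam [by_, bz] (α t) - arcParam Lyz (β t)‖ } }.Nonempty := by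
    refine ⟨_, fun t => 1 + t, fun t => 1 + ((z - y : ℕ) : ℝ) * t, ?_, ?_, ?_, ?_, by norm_num,
      by norm_num, by norm_num, ?_, rfl⟩
    · exact (continuous_const.add continuous_id).continuousOn
    · exact (continuous_const.add (continuous_const.mul continuous_id)).continuousOn
    · exact fun a _ b _ hab => by simpa using hab
    · intro a _ b _ hab
      have h0 : (0:ℝ) ≤ ((z - y : ℕ) : ℝ) := Nat.cast_nonneg _
      dsimp only
      nlinarith
    · rw [hlen_yz]; push_cast [Nat.cast_sub hyz.le]; ring
  obtain ⟨d, hdS, hdlt⟩ := exists_lt_of_csInf_lt hne (lt_of_le_of_lt h (by linarith : δ < δ + ε/2))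
  obtain ⟨α, β, hαc, hβc, hαm, hβm, hα0, hβ0, hα1, hβ1, hd⟩ := hdS
  have hα1' : α 1 = 2 := by simpa using hα1
  have hβ1' : β 1 = ((z - y + 1 : ℕ) : ℝ) := by rw [hβ1, hlen_yz]
  have h01 : (0:ℝ) ∈ Icc (0:ℝ) 1 := by constructor <;> norm_num
  have h11 : (1:ℝ) ∈ Icc (0:ℝ) 1 := by constructor <;> norm_num
  have hαr : ∀ t ∈ Icc (0:ℝ) 1, 1 ≤ α t ∧ α t ≤ 2 := by
    intro t ht
    exact ⟨hα0 ▸ hαm h01 ht ht.1, hα1' ▸ hαm ht h11 ht.2⟩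
  have hβr : ∀ t ∈ Icc (0:ℝ) 1, 1 ≤ β t ∧ β t ≤ ((z - y + 1 : ℕ) : ℝ) := by
    intro t ht
    exact ⟨hβ0 ▸ hβm h01 ht ht.1, hβ1' ▸ hβm ht h11 ht.2⟩
  -- pointwise bound for the (y,z) matching
  have hbdd : BddAbove { e : ℝ | ∃ t ∈ Set.Icc (0 : ℝ) 1,
      e = ‖arcParam [by_, bz] (α t) - arcParam Lyz (β t)‖ } := by
    refine ⟨2 * normSum [by_, bz] + 2 * normSum Lyz, ?_⟩
    rintro e ⟨t, ht, rfl⟩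
    have h1 := norm_arcParam_le [by_, bz] (α t) (by linarith [(hαr t ht).1])
    have h2 := norm_arcParam_le Lyz (β t) (by linarith [(hβr t ht).1])
    calc ‖arcParam [by_, bz] (α t) - arcParam Lyz (β t)‖
        ≤ ‖arcParam [by_, bz] (α t)‖ + ‖arcParam Lyz (β t)‖ := norm_sub_le _ _
      _ ≤ 2 * normSum [by_, bz] + 2 * normSum Lyz := by linarith
  have hpt : ∀ t ∈ Icc (0:ℝ) 1, ‖arcParam [by_, bz] (α t) - arcParam Lyz (β t)‖ ≤ d := by
    intro t ht
    rw [hd]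
    exact le_csSup hbdd ⟨t, ht, rfl⟩
  have hd0 : 0 ≤ d := le_trans (norm_nonneg _) (hpt 0 h01)
  -- find parameters hitting the vertices i and j
  set ni : ℕ := i - y + 1 with hni
  set nj : ℕ := j - y + 1 with hnj
  set n : ℕ := i - y with hn
  clear_value n ni nj
  have hsub := intermediate_value_Icc (zero_le_one) hβc
  have hvi : ((ni : ℕ) : ℝ) ∈ Icc (β 0) (β 1) := by
    rw [hβ0, hβ1']
    constructor
    · exact Nat.one_le_cast.mpr (by omega)
    · exact Nat.cast_le.mpr (by omega)
  have hvj : ((nj : ℕ) : ℝ) ∈ Icc (β 0) (β 1) := by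
    rw [hβ0, hβ1']
    constructor
    · exact Nat.one_le_cast.mpr (by omega)
    · exact Nat.cast_le.mpr (by omega)
  obtain ⟨ti, hti, htiv⟩ := hsub hvi
  obtain ⟨tj, htj, htjv⟩ := hsub hvj
  have htij : ti < tj := by
    by_contra hcon
    push_neg at hcon
    have := hβm htj hti hcon
    rw [htiv, htjv] at this
    have : nj ≤ ni := by exact_mod_cast this
    omega
  -- the vertices as points on the (y,z) subpolyline
  have hbiv : arcParam Lyz ((ni : ℕ) : ℝ) = bi := by
    rw [arcParam_nat, hLyz, getD_drop_take _ _ _ _ (by omega), hbi_def]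
    congr 1; omega
  have hbjv : arcParam Lyz ((nj : ℕ) : ℝ) = bj := by
    rw [arcParam_nat, hLyz, getD_drop_take _ _ _ _ (by omega), hbj_def]
    congr 1; omega
  -- segment map
  set P : ℝ → Pt := fun x => (2 - x) • by_ + (x - 1) • bz with hPdef
  have hP : ∀ t ∈ Icc (0:ℝ) 1, arcParam [by_, bz] (α t) = P (α t) := by
    intro t ht
    exact arcParam_pair _ _ _ (hαr t ht).1 (hαr t ht).2
  have hPaff : ∀ lam u v : ℝ, (1 - lam) • P u + lam • P v = P ((1 - lam) * u + lam * v) := by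
    intro lam u v
    simp only [hPdef, smul_add, smul_smul]
    module
  have hPi : ‖P (α ti) - bi‖ ≤ d := by
    have := hpt ti hti
    rwa [hP ti hti, htiv, hbiv] at this
  have hPj : ‖P (α tj) - bj‖ ≤ d := by
    have := hpt tj htj
    rwa [hP tj htj, htjv, hbjv] at this
  -- time reparametrization onto [ti, tj]
  set T : ℝ → ℝ := fun s => ti + s * (tj - ti) with hTdef
  have hTmem : ∀ s ∈ Icc (0:ℝ) 1, T s ∈ Icc ti tj := by
    intro s hs
    constructor
    · simp only [hTdef]; nlinarith [hs.1, hs.2, htij.le]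
    · simp only [hTdef]; nlinarith [hs.1, hs.2, htij.le]
  have hTmem01 : ∀ s ∈ Icc (0:ℝ) 1, T s ∈ Icc (0:ℝ) 1 := by
    intro s hs
    exact ⟨hti.1.trans (hTmem s hs).1, (hTmem s hs).2.trans htj.2⟩
  have hTmono : ∀ s₁ s₂ : ℝ, s₁ ≤ s₂ → T s₁ ≤ T s₂ := by
    intro s₁ s₂ hs
    simp only [hTdef]
    nlinarith [htij.le]
  have hT0 : T 0 = ti := by simp [hTdef]
  have hT1 : T 1 = tj := by simp [hTdef]
  have hTcont : Continuous T := by continuity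
  -- main claim, abstracting over the λ-reparametrization
  suffices hmain : ∀ lam : ℝ → ℝ, ContinuousOn lam (Icc 0 1) → MonotoneOn lam (Icc 0 1) →
      lam 0 = 0 → lam 1 = 1 → (∀ s ∈ Icc (0:ℝ) 1, 0 ≤ lam s ∧ lam s ≤ 1) →
      (∀ s ∈ Icc (0:ℝ) 1, (1 - lam s) * α ti + lam s * α tj = α (T s)) →
      frechetDist [bi, bj] Lij ≤ 2 * d by
    by_cases hdeg : α tj = α ti
    · have hconst : ∀ s ∈ Icc (0:ℝ) 1, α (T s) = α ti := by
        intro s hs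
        have h1 : α ti ≤ α (T s) := hαm hti (hTmem01 s hs) (hTmem s hs).1
        have h2 : α (T s) ≤ α tj := hαm (hTmem01 s hs) htj (hTmem s hs).2
        rw [hdeg] at h2
        linarith
      have := hmain (fun s => s) continuousOn_id (fun a _ b _ hab => hab) rfl rfl
        (fun s hs => ⟨hs.1, hs.2⟩)
        (fun s hs => by rw [hconst s hs, hdeg]; ring)
      linarith
    · have hlt : α ti < α tj :=
        lt_of_le_of_ne (hαm hti htj htij.le) (fun hcon => hdeg hcon.symm)
      have hden : α tj - α ti ≠ 0 := by linarith
      have := hmain (fun s => (α (T s) - α ti) / (α tj - α ti))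
        (((hαc.comp hTcont.continuousOn hTmem01).sub continuousOn_const).div_const _)
        (fun a ha b hb hab => by
          have := hαm (hTmem01 a ha) (hTmem01 b hb) (hTmono a b hab)
          apply div_le_div_of_nonneg_right ?_ ?_ |>.trans_eq rfl
          all_goals try linarith
          )
        (by rw [hT0]; simp)
        (by rw [hT1]; field_simp)
        (fun s hs => ⟨div_nonneg (by linarith [hαm hti (hTmem01 s hs) (hTmem s hs).1]) (by linarith),
          (div_le_one (by linarith)).mpr (by linarith [hαm (hTmem01 s hs) htj (hTmem s hs).2])⟩)
        (fun s hs => by field_simp; ring)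
      linarith
  -- prove the main claim
  intro lam hlc hlm hl0 hl1 hlr hlkey
  set α' : ℝ → ℝ := fun s => 1 + lam s with hα'def
  set β' : ℝ → ℝ := fun s => β (T s) - ((n : ℕ) : ℝ) with hβ'def
  have hβT : ∀ s ∈ Icc (0:ℝ) 1, ((ni:ℕ):ℝ) ≤ β (T s) ∧ β (T s) ≤ ((nj:ℕ):ℝ) := by
    intro s hs
    constructor
    · rw [← htiv]; exact hβm hti (hTmem01 s hs) (hTmem s hs).1
    · rw [← htjv]; exact hβm (hTmem01 s hs) htj (hTmem s hs).2
  -- the shift identity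
  have hshift : ∀ s ∈ Icc (0:ℝ) 1, arcParam Lij (β' s) = arcParam Lyz (β (T s)) := by
    intro s hs
    obtain ⟨hu1, hu2⟩ := hβT s hs
    set v : ℝ := β (T s) - ((n : ℕ) : ℝ) with hvdef
    have hni' : ((ni:ℕ):ℝ) = ((n:ℕ):ℝ) + 1 := by rw [hni]; push_cast; ring
    have hv1 : (1:ℝ) ≤ v := by
      simp only [hvdef]; linarith
    have hv0 : (0:ℝ) ≤ v := by linarith
    have hveq : β (T s) = v + ((n:ℕ):ℝ) := by simp only [hvdef]; ring
    have hvle : v ≤ ((j - i + 1 : ℕ) : ℝ) := by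
      have hnn : nj = (j - i + 1) + n := by omega
      have : ((nj:ℕ):ℝ) = ((j - i + 1 : ℕ):ℝ) + ((n:ℕ):ℝ) := by rw [hnn]; push_cast; ring
      simp only [hvdef]; linarith
    have hflv : 1 ≤ ⌊v⌋₊ := Nat.le_floor (by exact_mod_cast hv1)
    have hcv : ⌈v⌉₊ ≤ j - i + 1 := Nat.ceil_le.mpr hvle
    have hfloor : ⌊β (T s)⌋₊ = ⌊v⌋₊ + n := by rw [hveq, Nat.floor_add_natCast hv0]
    have hceil : ⌈β (T s)⌉₊ = ⌈v⌉₊ + n := by rw [hveq, Nat.ceil_add_natCast hv0]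
    have hcu : ⌈β (T s)⌉₊ ≤ z - y + 1 := by
      apply Nat.ceil_le.mpr
      calc β (T s) ≤ ((nj:ℕ):ℝ) := hu2
        _ ≤ ((z - y + 1 : ℕ):ℝ) := Nat.cast_le.mpr (by omega)
    rw [hLij, hLyz, arcParam_drop_take L (i-1) (j-i+1) v hv1 hcv,
      arcParam_drop_take L (y-1) (z-y+1) (β (T s)) (by linarith) hcu,
      hfloor, hceil, hveq]
    have e1 : (y-1) + (⌊v⌋₊ + n - 1) = (i-1) + (⌊v⌋₊ - 1) := by omega
    have hclv : 1 ≤ ⌈v⌉₊ := hflv.trans (Nat.floor_le_ceil v)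
    have e2 : (y-1) + (⌈v⌉₊ + n - 1) = (i-1) + (⌈v⌉₊ - 1) := by omega
    rw [e1, e2]
    push_cast
    ring_nf
  -- membership of the new matching in the defining set for (i,j)
  have hlb : BddBelow { d : ℝ | ∃ α β : ℝ → ℝ,
      ContinuousOn α (Set.Icc 0 1) ∧ ContinuousOn β (Set.Icc 0 1) ∧
      MonotoneOn α (Set.Icc 0 1) ∧ MonotoneOn β (Set.Icc 0 1) ∧
      α 0 = 1 ∧ β 0 = 1 ∧ α 1 = ([bi, bj] : List Pt).length ∧ β 1 = Lij.length ∧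
      d = sSup { e : ℝ | ∃ t ∈ Set.Icc (0 : ℝ) 1,
            e = ‖arcParam [bi, bj] (α t) - arcParam Lij (β t)‖ } } := by
    refine ⟨0, ?_⟩
    rintro e ⟨α'', β'', _, _, _, _, _, _, _, _, rfl⟩
    apply Real.sSup_nonneg
    rintro e' ⟨t, _, rfl⟩
    positivity
  have hmem : sSup { e : ℝ | ∃ t ∈ Set.Icc (0 : ℝ) 1,
        e = ‖arcParam [bi, bj] (α' t) - arcParam Lij (β' t)‖ } ∈
      { d : ℝ | ∃ α β : ℝ → ℝ,
      ContinuousOn α (Set.Icc 0 1) ∧ ContinuousOn β (Set.Icc 0 1) ∧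
      MonotoneOn α (Set.Icc 0 1) ∧ MonotoneOn β (Set.Icc 0 1) ∧
      α 0 = 1 ∧ β 0 = 1 ∧ α 1 = ([bi, bj] : List Pt).length ∧ β 1 = Lij.length ∧
      d = sSup { e : ℝ | ∃ t ∈ Set.Icc (0 : ℝ) 1,
            e = ‖arcParam [bi, bj] (α t) - arcParam Lij (β t)‖ } } := by
    refine ⟨α', β', ?_, ?_, ?_, ?_, ?_, ?_, ?_, ?_, rfl⟩
    · exact continuousOn_const.add hlc
    · exact (hβc.comp hTcont.continuousOn hTmem01).sub continuousOn_const
    · intro a ha b hb hab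
      simp only [hα'def]
      linarith [hlm ha hb hab]
    · intro a ha b hb hab
      simp only [hβ'def]
      have := hβm (hTmem01 a ha) (hTmem01 b hb) (hTmono a b hab)
      linarith
    · simp [hα'def, hl0]
    · simp only [hβ'def, hT0, htiv]
      have hnn : ni = n + 1 := by omega
      rw [hnn]; push_cast; ring
    · norm_num [hα'def, hl1]
    · simp only [hβ'def, hT1, htjv, hlen_ij]
      have hnn : nj = (j - i + 1) + n := by omega
      rw [hnn]; push_cast; ring
  -- the pointwise 2d bound
  have hptnew : ∀ e ∈ { e : ℝ | ∃ t ∈ Set.Icc (0 : ℝ) 1,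
      e = ‖arcParam [bi, bj] (α' t) - arcParam Lij (β' t)‖ }, e ≤ 2 * d := by
    rintro e ⟨s, hs, rfl⟩
    obtain ⟨hls0, hls1⟩ := hlr s hs
    have e1 : arcParam [bi, bj] (α' s) = (1 - lam s) • bi + lam s • bj := by
      have := arcParam_pair bi bj (1 + lam s) (by linarith) (by linarith)
      rw [hα'def]
      simp only []
      rw [this]
      congr 1 <;> congr 1 <;> ring
    have hcomb : (1 - lam s) • P (α ti) + lam s • P (α tj) = P (α (T s)) := by
      rw [hPaff, hlkey s hs]
    have hseg := hpt (T s) (hTmem01 s hs)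
    rw [hP (T s) (hTmem01 s hs)] at hseg
    rw [e1, hshift s hs]
    have expand : (1 - lam s) • bi + lam s • bj - arcParam Lyz (β (T s))
        = ((1 - lam s) • (bi - P (α ti)) + lam s • (bj - P (α tj)))
          + (P (α (T s)) - arcParam Lyz (β (T s))) := by
      rw [← hcomb]
      module
    rw [expand]
    have n1 : ‖(1 - lam s) • (bi - P (α ti))‖ ≤ (1 - lam s) * d := by
      rw [norm_smul, Real.norm_of_nonneg (by linarith)]
      have : ‖bi - P (α ti)‖ ≤ d := by rwa [norm_sub_rev]
      nlinarith
    have n2 : ‖lam s • (bj - P (α tj))‖ ≤ lam s * d := by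
      rw [norm_smul, Real.norm_of_nonneg hls0]
      have : ‖bj - P (α tj)‖ ≤ d := by rwa [norm_sub_rev]
      nlinarith
    calc ‖((1 - lam s) • (bi - P (α ti)) + lam s • (bj - P (α tj)))
          + (P (α (T s)) - arcParam Lyz (β (T s)))‖
        ≤ ‖(1 - lam s) • (bi - P (α ti)) + lam s • (bj - P (α tj))‖
          + ‖P (α (T s)) - arcParam Lyz (β (T s))‖ := norm_add_le _ _
      _ ≤ (‖(1 - lam s) • (bi - P (α ti))‖ + ‖lam s • (bj - P (α tj))‖)
          + ‖P (α (T s)) - arcParam Lyz (β (T s))‖ := by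
          gcongr
          exact norm_add_le _ _
      _ ≤ ((1 - lam s) * d + lam s * d) + d := by
          exact add_le_add (add_le_add n1 n2) hseg
      _ = 2 * d := by ring
  calc frechetDist [bi, bj] Lij
      ≤ sSup { e : ℝ | ∃ t ∈ Set.Icc (0 : ℝ) 1,
          e = ‖arcParam [bi, bj] (α' t) - arcParam Lij (β' t)‖ } := csInf_le hlb hmem
    _ ≤ 2 * d := Real.sSup_le hptnew (by linarith)
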